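/- For every valid smart profile B on n agents, the greedy unravelling Unravel(U) terminates within n steps: whenever a partial assignment X is not total, the level ℓ(X) is well-defined (some undetermined agent is resolvable at some level, since the last level of every ballot is a direct vote), and iterating X^{t+1} = step(X^t) from the everywhere-undefined assignment X^0 yields a total assignment X^n ∈ D^N after at most n iterations. -/
import Mathlib


namespace SmartVoting

/-- A smart ballot for agent `a`: levels `1, …, k-1` are delegations `(S h, F h)`
(with `a ∉ S h` and `F h` depending only on the votes of the members of `S h`),
and level `k` is the backup direct vote. -/
structure SmartBallot (N D : Type*) (a : N) where
  k : ℕ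
  k_pos : 1 ≤ k
  S : ℕ → Finset N
  F : ℕ → (N → D) → D
  vote : D
  no_self : ∀ h, 1 ≤ h → h < k → a ∉ S h
  local_dep : ∀ h, 1 ≤ h → h < k →
    ∀ Y Y' : N → D, (∀ s ∈ S h, Y s = Y' s) → F h Y = F h Y'

variable {N D : Type*} [Fintype N] [DecidableEq N]

/-- `v` is the necessary winner of agent `a`'s level-`h` delegation at the partial
assignment `X`: every total assignment extending `X` makes the delegation function
evaluate to `v`. -/
def NecWinner (B : ∀ a : N, SmartBallot N D a) (a : N) (h : ℕ)
    (X : N → Option D) (v : D) : Prop :=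
  ∀ Y : N → D, (∀ b w, X b = some w → Y b = w) → (B a).F h Y = v

/-- Agent `a` is resolvable at level `h` given the partial assignment `X`:
`a` is still undetermined, and level `h` of its ballot is either its direct vote
(`h = k_a`) or a delegation with a necessary winner at `X`. -/
def ResolvableAt (B : ∀ a : N, SmartBallot N D a) (X : N → Option D)
    (a : N) (h : ℕ) : Prop :=
  X a = none ∧ 1 ≤ h ∧ h ≤ (B a).k ∧
    (h = (B a).k ∨ ∃ v, NecWinner B a h X v)

/-- The least level at which some agent is resolvable given `X`. -/
noncomputable def lev (B : ∀ a : N, SmartBallot N D a) (X : N → Option D) : ℕ :=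
  sInf {h | ∃ a, ResolvableAt B X a h}

open scoped Classical in
/-- One step of the greedy procedure `Unravel(U)`: every agent resolvable at the
least resolvable level `lev B X` gets its direct vote or necessary winner. -/
noncomputable def stepU (B : ∀ a : N, SmartBallot N D a) (X : N → Option D) :
    N → Option D := fun a =>
  if ResolvableAt B X a (lev B X) then
    (if lev B X = (B a).k then some (B a).vote
     else if hw : ∃ v, NecWinner B a (lev B X) X v then some hw.choose else X a)
  else X a

/-- `Unravel(U)` terminates within `n` steps on every valid smart profile:
whenever `X` is not total some agent is resolvable at some level (so the level
`lev B X` is well-defined), and iterating `stepU` from the everywhere-undefined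
assignment yields a total assignment after at most `n = |N|` iterations. -/
lemma stepU_of_some (B : ∀ a : N, SmartBallot N D a) (X : N → Option D) (a : N)
    (h : X a ≠ none) : stepU B X a = X a := by
  unfold stepU
  rw [if_neg]
  intro hr
  exact h hr.1

lemma exists_new (B : ∀ a : N, SmartBallot N D a) (X : N → Option D)
    (h : ∃ a, X a = none) : ∃ a, X a = none ∧ stepU B X a ≠ none := by
  obtain ⟨a0, ha0⟩ := h
  have hne : {h | ∃ a, ResolvableAt B X a h}.Nonempty :=
    ⟨(B a0).k, a0, ha0, (B a0).k_pos, le_refl _, Or.inl rfl⟩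
  obtain ⟨a, ha⟩ := Nat.sInf_mem hne
  have ha' : ResolvableAt B X a (lev B X) := ha
  refine ⟨a, ha'.1, ?_⟩
  unfold stepU
  rw [if_pos ha']
  by_cases hk : lev B X = (B a).k
  · rw [if_pos hk]; simp
  · rw [if_neg hk]
    have hv : ∃ v, NecWinner B a (lev B X) X v := ha'.2.2.2.resolve_left hk
    rw [dif_pos hv]; simp

open scoped Classical in
private noncomputable def Df (X : N → Option D) : Finset N :=
  Finset.univ.filter fun a => (X a).isSome

lemma Df_subset_step (B : ∀ a : N, SmartBallot N D a) (X : N → Option D) :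
    Df X ⊆ Df (stepU B X) := by
  classical
  intro a ha
  simp only [Df, Finset.mem_filter, Finset.mem_univ, true_and] at ha ⊢
  rw [stepU_of_some B X a (by simp [Option.isSome_iff_exists] at ha; rcases ha with ⟨w, hw⟩; simp [hw])]
  exact ha

lemma card_bound (B : ∀ a : N, SmartBallot N D a) :
    ∀ t : ℕ, min t (Fintype.card N) ≤ (Df ((stepU B)^[t] (fun _ => none))).card := by
  classical
  intro t
  induction t with
  | zero => simp
  | succ t ih =>
    set X := (stepU B)^[t] (fun _ => none) with hX
    rw [Function.iterate_succ_apply', ← hX]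
    by_cases htot : ∃ a, X a = none
    · obtain ⟨a, ha, hnew⟩ := exists_new B X htot
      have hss : Df X ⊂ Df (stepU B X) := by
        refine ⟨Df_subset_step B X, fun hsub => ?_⟩
        have : a ∈ Df X := hsub (by
          simp only [Df, Finset.mem_filter, Finset.mem_univ, true_and]
          exact Option.isSome_iff_ne_none.mpr hnew)
        simp only [Df, Finset.mem_filter, Finset.mem_univ, true_and, ha] at this
        exact absurd this (by simp)
      have hlt := Finset.card_lt_card hss
      have : min (t + 1) (Fintype.card N) ≤ min t (Fintype.card N) + 1 := by omega
      omega
    · push_neg at htot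
      have huniv : Df X = Finset.univ := by
        apply Finset.eq_univ_of_forall
        intro a
        simp only [Df, Finset.mem_filter, Finset.mem_univ, true_and]
        exact Option.isSome_iff_ne_none.mpr (htot a)
      have h1 := Finset.card_le_card (Df_subset_step B X)
      rw [huniv, Finset.card_univ] at h1
      omega

theorem unravelU_terminates (B : ∀ a : N, SmartBallot N D a) :
    (∀ X : N → Option D, (∃ a, X a = none) → ∃ a h, ResolvableAt B X a h) ∧
    (∀ a : N, ((stepU B)^[Fintype.card N] (fun _ => none)) a ≠ none) := by
  classical
  constructor
  · rintro X ⟨a, ha⟩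
    exact ⟨a, (B a).k, ha, (B a).k_pos, le_refl _, Or.inl rfl⟩
  · intro a
    have h := card_bound B (Fintype.card N)
    rw [min_self] at h
    have hcard : (Df ((stepU B)^[Fintype.card N] (fun _ => none) : N → Option D)).card
        = Fintype.card N := by
      have h2 := Finset.card_le_univ
        (Df ((stepU B)^[Fintype.card N] (fun _ => none) : N → Option D))
      omega
    have := Finset.eq_univ_of_card _ hcard
    have ha : a ∈ Df ((stepU B)^[Fintype.card N] (fun _ => none) : N → Option D) := by
      rw [this]; exact Finset.mem_univ a
    simp only [Df, Finset.mem_filter, Finset.mem_univ, true_and] at ha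
    exact Option.isSome_iff_ne_none.mp ha

end SmartVoting
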